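/- Source-term lower bound: for every U ∈ 𝒢, all v*, B* ∈ ℝ³ and every b ∈ ℝ, one has −b·(S(U)·n*) ≥ b·(v*·B*) − (|b|/√ρ)·(U·n* + |B*|²/2). -/

import Mathlib

noncomputable section

open Finset

/-- An MHD state `U = (ρ, m, B, E)` viewed as a vector in `ℝ⁸`. -/
abbrev MHDState := Fin 8 → ℝ

namespace MHD

/-- Build a state from density, momentum, magnetic field, total energy. -/
def mk (ρ : ℝ) (m B : Fin 3 → ℝ) (E : ℝ) : MHDState :=
  ![ρ, m 0, m 1, m 2, B 0, B 1, B 2, E]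

/-- Density component. -/
def dens (U : MHDState) : ℝ := U 0

/-- Momentum components. -/
def mom (U : MHDState) : Fin 3 → ℝ := ![U 1, U 2, U 3]

/-- Magnetic field components. -/
def magB (U : MHDState) : Fin 3 → ℝ := ![U 4, U 5, U 6]

/-- Total energy component. -/
def toten (U : MHDState) : ℝ := U 7

/-- Euclidean dot product on `ℝ³`. -/
def dot3 (a b : Fin 3 → ℝ) : ℝ := ∑ k, a k * b k

/-- Squared Euclidean norm on `ℝ³`. -/
def sq3 (a : Fin 3 → ℝ) : ℝ := dot3 a a

/-- Euclidean norm on `ℝ³`. -/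
def norm3 (a : Fin 3 → ℝ) : ℝ := Real.sqrt (sq3 a)

/-- Velocity `v = m / ρ`. -/
def vel (U : MHDState) : Fin 3 → ℝ := fun k => mom U k / dens U

/-- Internal energy `𝓔(U) = E − (|m|²/ρ + |B|²)/2`. -/
def intE (U : MHDState) : ℝ := toten U - (sq3 (mom U) / dens U + sq3 (magB U)) / 2

/-- Specific internal energy `e = 𝓔(U)/ρ`. -/
def specE (U : MHDState) : ℝ := intE U / dens U

/-- The admissible state set `𝒢`. -/
def Gset : Set MHDState := {U | 0 < dens U ∧ 0 < intE U}

/-- The set `𝒢_ρ` of states with positive density. -/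
def Grho : Set MHDState := {U | 0 < dens U}

/-- Euclidean dot product on `ℝ⁸`. -/
def dot8 (U V : MHDState) : ℝ := ∑ i, U i * V i

/-- The vector `n* = (|v*|²/2, −v*, −B*, 1)`. -/
def nstar (vs Bs : Fin 3 → ℝ) : MHDState :=
  mk (sq3 vs / 2) (fun k => -vs k) (fun k => -Bs k) 1

/-- The set `𝒢*`. -/
def GstarSet : Set MHDState :=
  {U | 0 < dens U ∧ ∀ vs Bs : Fin 3 → ℝ, 0 < dot8 U (nstar vs Bs) + sq3 Bs / 2}

/-- Equation of state assumption: for `ρ > 0`, `e > 0 ↔ p(ρ,e) > 0`. -/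
def IsEOS (pfun : ℝ → ℝ → ℝ) : Prop :=
  ∀ ρ e : ℝ, 0 < ρ → (0 < e ↔ 0 < pfun ρ e)

/-- Pressure of a state, via the equation of state. -/
def pres (pfun : ℝ → ℝ → ℝ) (U : MHDState) : ℝ := pfun (dens U) (specE U)

/-- Total pressure `p + |B|²/2`. -/
def ptot (pfun : ℝ → ℝ → ℝ) (U : MHDState) : ℝ := pres pfun U + sq3 (magB U) / 2

/-- The `i`-th flux `F_i(U)`. -/
def flux (pfun : ℝ → ℝ → ℝ) (i : Fin 3) (U : MHDState) : MHDState :=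
  mk (dens U * vel U i)
    (fun k => dens U * vel U i * vel U k - magB U i * magB U k
      + ptot pfun U * (if k = i then 1 else 0))
    (fun k => vel U i * magB U k - magB U i * vel U k)
    (vel U i * (toten U + ptot pfun U) - magB U i * dot3 (vel U) (magB U))

/-- Directional inner product `⟨ξ, w⟩ = Σ_{k<d} ξ_k w_k` for `ξ ∈ ℝ^d`, `w ∈ ℝ³`, `d ≤ 3`. -/
def dirDot {d : ℕ} (hd : d ≤ 3) (ξ : Fin d → ℝ) (w : Fin 3 → ℝ) : ℝ :=
  ∑ k, ξ k * w (Fin.castLE hd k)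

/-- Directional flux `⟨ξ, F(U)⟩ = Σ_{i<d} ξ_i F_i(U)`. -/
def dirFlux (pfun : ℝ → ℝ → ℝ) {d : ℕ} (hd : d ≤ 3) (ξ : Fin d → ℝ) (U : MHDState) :
    MHDState :=
  ∑ i, ξ i • flux pfun (Fin.castLE hd i) U

/-- `ξ` is a unit vector. -/
def unitVec {d : ℕ} (ξ : Fin d → ℝ) : Prop := (∑ k, (ξ k) ^ 2) = 1

/-- `𝒞_s(U) = p / (ρ √(2e))`. -/
def soundC (pfun : ℝ → ℝ → ℝ) (U : MHDState) : ℝ :=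
  pres pfun U / (dens U * Real.sqrt (2 * specE U))

/-- `𝒞(U; ξ)`. -/
def waveC (pfun : ℝ → ℝ → ℝ) {d : ℕ} (hd : d ≤ 3) (ξ : Fin d → ℝ) (U : MHDState) : ℝ :=
  Real.sqrt ((soundC pfun U ^ 2 + sq3 (magB U) / dens U
    + Real.sqrt ((soundC pfun U ^ 2 + sq3 (magB U) / dens U) ^ 2
      - 4 * soundC pfun U ^ 2 * dirDot hd ξ (magB U) ^ 2 / dens U)) / 2)

/-- Roe-type averaged velocity `v̄ = (√ρ v + √ρ̃ ṽ)/(√ρ + √ρ̃)`. -/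
def roeV (U Ut : MHDState) : Fin 3 → ℝ := fun k =>
  (Real.sqrt (dens U) * vel U k + Real.sqrt (dens Ut) * vel Ut k)
    / (Real.sqrt (dens U) + Real.sqrt (dens Ut))

/-- `α_r(U, Ũ; ξ)`. -/
def alphaR (pfun : ℝ → ℝ → ℝ) {d : ℕ} (hd : d ≤ 3) (ξ : Fin d → ℝ) (U Ut : MHDState) : ℝ :=
  max (dirDot hd ξ (vel U)) (dirDot hd ξ (roeV U Ut)) + waveC pfun hd ξ U
    + norm3 (magB U - magB Ut) / (Real.sqrt (dens U) + Real.sqrt (dens Ut))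

/-- `α_l(U, Ũ; ξ)`. -/
def alphaL (pfun : ℝ → ℝ → ℝ) {d : ℕ} (hd : d ≤ 3) (ξ : Fin d → ℝ) (U Ut : MHDState) : ℝ :=
  min (dirDot hd ξ (vel U)) (dirDot hd ξ (roeV U Ut)) - waveC pfun hd ξ U
    - norm3 (magB U - magB Ut) / (Real.sqrt (dens U) + Real.sqrt (dens Ut))

/-- `α_⋆(U, Ũ; ξ)`. -/
def alphaS (pfun : ℝ → ℝ → ℝ) {d : ℕ} (hd : d ≤ 3) (ξ : Fin d → ℝ) (U Ut : MHDState) : ℝ :=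
  max (|dirDot hd ξ (vel U)|) (|dirDot hd ξ (roeV U Ut)|) + waveC pfun hd ξ U
    + norm3 (magB U - magB Ut) / (Real.sqrt (dens U) + Real.sqrt (dens Ut))

/-- The vector `θ(U, v*, B*) = 2^{−1/2}(B − B*, √ρ(v − v*), √(2ρe)) ∈ ℝ⁷`. -/
def theta (U : MHDState) (vs Bs : Fin 3 → ℝ) : Fin 7 → ℝ :=
  ![(magB U 0 - Bs 0) / Real.sqrt 2,
    (magB U 1 - Bs 1) / Real.sqrt 2,
    (magB U 2 - Bs 2) / Real.sqrt 2,
    Real.sqrt (dens U) * (vel U 0 - vs 0) / Real.sqrt 2,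
    Real.sqrt (dens U) * (vel U 1 - vs 1) / Real.sqrt 2,
    Real.sqrt (dens U) * (vel U 2 - vs 2) / Real.sqrt 2,
    Real.sqrt (2 * intE U) / Real.sqrt 2]

/-- `|θ|²`. -/
def thetaSq (U : MHDState) (vs Bs : Fin 3 → ℝ) : ℝ := ∑ k, theta U vs Bs k ^ 2

/-- Godunov–Powell source vector `S(U) = (0, B, v, v·B)`. -/
def source (U : MHDState) : MHDState := mk 0 (magB U) (vel U) (dot3 (vel U) (magB U))

/-- HLL numerical flux with clamped wave speeds `σm ≤ 0 ≤ σp`. -/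
def hllFlux (pfun : ℝ → ℝ → ℝ) {d : ℕ} (hd : d ≤ 3) (ξ : Fin d → ℝ)
    (Um Up : MHDState) (σm σp : ℝ) : MHDState :=
  (σp - σm)⁻¹ • (σp • dirFlux pfun hd ξ Um - σm • dirFlux pfun hd ξ Up
    + (σm * σp) • (Up - Um))

/-- HLL intermediate state `H(U⁻, U⁺; ξ)`. -/
def hllMid (pfun : ℝ → ℝ → ℝ) {d : ℕ} (hd : d ≤ 3) (ξ : Fin d → ℝ)
    (Um Up : MHDState) (σm σp : ℝ) : MHDState :=
  (σp - σm)⁻¹ • (σp • Up - dirFlux pfun hd ξ Up - σm • Um + dirFlux pfun hd ξ Um)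

/-- The quantity `α̂_j` of Theorem 2.3. -/
def alphaHat (pfun : ℝ → ℝ → ℝ) {d : ℕ} (hd : d ≤ 3) {N : ℕ}
    (s : Fin N → ℝ) (ξ : Fin N → Fin d → ℝ) (U : Fin N → MHDState) (j : Fin N) : ℝ :=
  max (dirDot hd (ξ j) (vel (U j)))
      ((∑ i, s i)⁻¹ * ∑ i, s i * dirDot hd (fun k => ξ j k - ξ i k) (roeV (U j) (U i)))
  + waveC pfun hd (ξ j) (U j)
  + 2 * (∑ i, s i)⁻¹ * ∑ i, s i *
      (norm3 (magB (U j) - magB (U i)) / (Real.sqrt (dens (U j)) + Real.sqrt (dens (U i))))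

def d1le3 : (1 : ℕ) ≤ 3 := by omega
def d2le3 : (2 : ℕ) ≤ 3 := by omega

/-- In one dimension the direction `ξ = 1`. -/
def xi1 : Fin 1 → ℝ := fun _ => 1

lemma mk_apply (ρ : ℝ) (m B : Fin 3 → ℝ) (E : ℝ) :
    mk ρ m B E 0 = ρ ∧ mk ρ m B E 1 = m 0 ∧ mk ρ m B E 2 = m 1 ∧ mk ρ m B E 3 = m 2 ∧
    mk ρ m B E 4 = B 0 ∧ mk ρ m B E 5 = B 1 ∧ mk ρ m B E 6 = B 2 ∧ mk ρ m B E 7 = E :=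
  ⟨rfl, rfl, rfl, rfl, rfl, rfl, rfl, rfl⟩

lemma dot8_mk (V : MHDState) (ρ : ℝ) (m B : Fin 3 → ℝ) (E : ℝ) :
    dot8 (mk ρ m B E) V = ρ * V 0 + m 0 * V 1 + m 1 * V 2 + m 2 * V 3
      + B 0 * V 4 + B 1 * V 5 + B 2 * V 6 + E * V 7 := by
  simp [dot8, Fin.sum_univ_eight, mk_apply, add_assoc]

lemma dot8_right_mk (V : MHDState) (ρ : ℝ) (m B : Fin 3 → ℝ) (E : ℝ) :
    dot8 V (mk ρ m B E) = V 0 * ρ + V 1 * m 0 + V 2 * m 1 + V 3 * m 2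
      + V 4 * B 0 + V 5 * B 1 + V 6 * B 2 + V 7 * E := by
  simp [dot8, Fin.sum_univ_eight, mk_apply, add_assoc]

lemma key (s E b a1 a2 a3 c1 c2 c3 : ℝ) (hs : 0 < s) (hE : 0 < E) :
    b * (a1*c1 + a2*c2 + a3*c3) ≤
      |b| / s * (E + s^2*(a1^2+a2^2+a3^2)/2 + (c1^2+c2^2+c3^2)/2) := by
  rw [div_mul_eq_mul_div, le_div_iff₀ hs]
  rcases abs_cases b with ⟨hb, hb0⟩ | ⟨hb, hb0⟩ <;> rw [hb]
  · nlinarith [mul_nonneg hb0 (sq_nonneg (s*a1 - c1)), mul_nonneg hb0 (sq_nonneg (s*a2 - c2)),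
      mul_nonneg hb0 (sq_nonneg (s*a3 - c3)), mul_nonneg hb0 hE.le]
  · nlinarith [mul_nonneg (neg_nonneg.2 hb0.le) (sq_nonneg (s*a1 + c1)),
      mul_nonneg (neg_nonneg.2 hb0.le) (sq_nonneg (s*a2 + c2)),
      mul_nonneg (neg_nonneg.2 hb0.le) (sq_nonneg (s*a3 + c3)),
      mul_nonneg (neg_nonneg.2 hb0.le) hE.le]


/-- Source-term lower bound:
`−b (S(U)·n*) ≥ b (v*·B*) − (|b|/√ρ)(U·n* + |B*|²/2)`. -/
theorem source_lower_bound
    (U : MHDState) (hU : U ∈ Gset) (vs Bs : Fin 3 → ℝ) (b : ℝ) :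
    -(b * dot8 (source U) (nstar vs Bs)) ≥
      b * dot3 vs Bs -
        |b| / Real.sqrt (dens U) * (dot8 U (nstar vs Bs) + sq3 Bs / 2) := by
  obtain ⟨hρ, hE⟩ := hU
  have hρ' : (U 0 : ℝ) ≠ 0 := ne_of_gt hρ
  have hs0 : 0 < Real.sqrt (dens U) := Real.sqrt_pos.mpr hρ
  have hs : Real.sqrt (dens U) ^ 2 = U 0 := Real.sq_sqrt hρ.le
  set s := Real.sqrt (dens U) with hsdef
  have h1 : -(b * dot8 (source U) (nstar vs Bs)) = b * dot3 vs Bs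
      - b * ((U 1 / U 0 - vs 0) * (U 4 - Bs 0) + (U 2 / U 0 - vs 1) * (U 5 - Bs 1)
        + (U 3 / U 0 - vs 2) * (U 6 - Bs 2)) := by
    simp only [source, nstar, dot8_mk, mk_apply, dot3, vel, mom, magB, dens,
      Fin.sum_univ_three, Matrix.cons_val_zero, Matrix.cons_val_one, Matrix.head_cons,
      Matrix.cons_val_two, Matrix.cons_val_three, Matrix.tail_cons]
    field_simp
    ring
  have h2 : dot8 U (nstar vs Bs) + sq3 Bs / 2 = intE U
      + s^2 * ((U 1 / U 0 - vs 0)^2 + (U 2 / U 0 - vs 1)^2 + (U 3 / U 0 - vs 2)^2) / 2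
      + ((U 4 - Bs 0)^2 + (U 5 - Bs 1)^2 + (U 6 - Bs 2)^2) / 2 := by
    rw [hs]
    simp only [nstar, dot8_right_mk, mk_apply, dot3, sq3, intE, toten, vel, mom, magB, dens,
      Fin.sum_univ_three, Matrix.cons_val_zero, Matrix.cons_val_one, Matrix.head_cons,
      Matrix.cons_val_two, Matrix.cons_val_three, Matrix.tail_cons]
    field_simp
    ring
  rw [ge_iff_le, h1, h2]
  have := key s (intE U) b (U 1 / U 0 - vs 0) (U 2 / U 0 - vs 1) (U 3 / U 0 - vs 2)
    (U 4 - Bs 0) (U 5 - Bs 1) (U 6 - Bs 2) hs0 hE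
  linarith
end MHD
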